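/- The set {ε₅, β₂, β₂α₅, β₂α₅α₆, β₂α₅α₆β₁} is a K-basis of the indecomposable projective module ẽ₅E over E = E(m,λ); in particular dim_K ẽ₅E = 5. -/

import Mathlib

/-!
The algebra `E(m,λ)` of Skowyrski's "Two tilts of higher spherical algebras",
realized as the quotient of the path algebra of the quiver `Q_E` by the
relations (E1)-(E8).  Vertices `1,…,6` are encoded as `0,…,5 : Fin 6`.
The path algebra is presented as the free algebra on the trivial paths
(idempotents) and the arrows, modulo the path-algebra relations
(orthogonal idempotents summing to `1`, source/target compatibility)
and the relations (E1)-(E8).  Paths compose left to right.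
-/

namespace TwoTiltsE

/-- Arrows of `Q_E`: α₁:1→2, α₂:2→3, α₃:1→6, α₄:6→3, α₅:3→4, α₆:4→1,
β₁:1→5, β₂:5→3, γ₀:3→1. -/
inductive EArr | a1 | a2 | a3 | a4 | a5 | a6 | b1 | b2 | g0

/-- Source vertex of an arrow. -/
def EArr.src : EArr → Fin 6
  | .a1 => 0 | .a2 => 1 | .a3 => 0 | .a4 => 5 | .a5 => 2
  | .a6 => 3 | .b1 => 0 | .b2 => 4 | .g0 => 2

/-- Target vertex of an arrow. -/
def EArr.tgt : EArr → Fin 6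
  | .a1 => 1 | .a2 => 2 | .a3 => 5 | .a4 => 2 | .a5 => 3
  | .a6 => 0 | .b1 => 4 | .b2 => 2 | .g0 => 0

/-- `EPath c i j` : the list of arrows `c` is a path from vertex `i` to
vertex `j` in `Q_E` (consecutive arrows composable, left to right). -/
def EPath : List EArr → Fin 6 → Fin 6 → Prop
  | [], i, j => i = j
  | a :: c, i, j => a.src = i ∧ EPath c a.tgt j

/-- The free algebra on trivial paths and arrows of `Q_E`. -/
abbrev EFree (K : Type*) [Field K] := FreeAlgebra K (Fin 6 ⊕ EArr)

variable {K : Type*} [Field K]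

/-- Trivial path at vertex `i`. -/
def fe (i : Fin 6) : EFree K := FreeAlgebra.ι K (Sum.inl i)
/-- The arrow `a` as an element of the free algebra. -/
def fa (a : EArr) : EFree K := FreeAlgebra.ι K (Sum.inr a)
/-- The product of a list of arrows in the free algebra. -/
def pathProd (c : List EArr) : EFree K := (c.map fa).prod

def A1 : EFree K := fa .a1
def A2 : EFree K := fa .a2
def A3 : EFree K := fa .a3
def A4 : EFree K := fa .a4
def A5 : EFree K := fa .a5
def A6 : EFree K := fa .a6
def B1 : EFree K := fa .b1
def B2 : EFree K := fa .b2
def G0 : EFree K := fa .g0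

/-- The defining relations of `E(m,λ)`: path algebra relations together
with (E1)-(E8). -/
inductive ERel (K : Type*) [Field K] (m : ℕ) (l : K) : EFree K → EFree K → Prop
  | orth (i j : Fin 6) : ERel K m l (fe i * fe j) (if i = j then fe i else 0)
  | total : ERel K m l (∑ i, fe i) 1
  | src (a : EArr) : ERel K m l (fe a.src * fa a) (fa a)
  | tgt (a : EArr) : ERel K m l (fa a * fe a.tgt) (fa a)
  | E1 : ERel K m l (A1 * A2 - A3 * A4 + B1 * B2) 0
  | E2 : ERel K m l (A3 * A4 * A5)
      (A1 * A2 * A5 + l • ((A1 * A2 * A5 * A6) ^ (m - 1) * (A1 * A2 * A5)))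
  | E3a : ERel K m l (G0 * B1) 0
  | E3b : ERel K m l (G0 * A3) (A5 * A6 * A3)
  | E3c : ERel K m l (G0 * A1)
      (A5 * A6 * A1 + l • ((A5 * A6 * A1 * A2) ^ (m - 1) * (A5 * A6 * A1)))
  | E4a : ERel K m l (A2 * G0)
      (A2 * A5 * A6 + l • ((A2 * A5 * A6 * A1) ^ (m - 1) * (A2 * A5 * A6)))
  | E4b : ERel K m l ((A2 * A5 * A6 * A1) ^ (m - 1) * (A2 * A5 * A6 * A3)) 0
  | E5a : ERel K m l (A4 * G0) (A4 * A5 * A6)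
  | E5b : ERel K m l (A4 * A5 * A6 * A1 * (A2 * A5 * A6 * A1) ^ (m - 1)) 0
  | E6 : ERel K m l (A6 * A3 * A4)
      (A6 * A1 * A2 + l • ((A6 * A1 * A2 * A5) ^ (m - 1) * (A6 * A1 * A2)))
  | E7a : ERel K m l (B2 * G0) 0
  | E7b : ERel K m l (B2 * A5 * A6 * A1) 0
  | E7c : ERel K m l (B2 * A5 * A6 * A3) 0
  | E7d : ERel K m l (B2 * A5 * A6 * B1 * B2) 0
  | E8l (i : Fin 6) (c : List EArr) (hc : EPath c i i)
      (hlen : c.length = 3 ∨ c.length = 4) (θ : EArr) (hθ : θ.tgt = i) :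
      ERel K m l (fa θ * (pathProd c) ^ m) 0
  | E8r (i : Fin 6) (c : List EArr) (hc : EPath c i i)
      (hlen : c.length = 3 ∨ c.length = 4) (φ : EArr) (hφ : φ.src = i) :
      ERel K m l ((pathProd c) ^ m * fa φ) 0

/-- The algebra `E(m,λ)`. -/
abbrev EAlg (K : Type*) [Field K] (m : ℕ) (l : K) := RingQuot (ERel K m l)

/-- The canonical projection onto `E(m,λ)`. -/
noncomputable def eq' (K : Type*) [Field K] (m : ℕ) (l : K) :
    EFree K →ₐ[K] EAlg K m l := RingQuot.mkAlgHom K (ERel K m l)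

/-- The image in `E(m,λ)` of the trivial path at vertex `i`. -/
noncomputable def eidem (K : Type*) [Field K] (m : ℕ) (l : K) (i : Fin 6) :
    EAlg K m l := eq' K m l (fe i)

/-- The indecomposable projective right module `ẽᵢ E(m,λ)`, viewed as the
`K`-subspace `ẽᵢ·E(m,λ)` of `E(m,λ)`. -/
noncomputable def eproj (K : Type*) [Field K] (m : ℕ) (l : K) (i : Fin 6) :
    Submodule K (EAlg K m l) :=
  LinearMap.range (LinearMap.mulLeft K (eidem K m l i))

end TwoTiltsE

namespace TwoTiltsEAux
open TwoTiltsE Matrix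

variable (K : Type*) [Field K] (m : ℕ) (l : K)

/-- Elementary matrix with a single `1` entry. -/
abbrev EM (i j : Fin 5) : Matrix (Fin 5) (Fin 5) K := Matrix.single i j 1

/-- Images of the trivial paths in the 5-dimensional representation `ẽ₅E`. -/
def mge : Fin 6 → Matrix (Fin 5) (Fin 5) K :=
  ![EM K 3 3, 0, EM K 1 1, EM K 2 2, EM K 0 0 + EM K 4 4, 0]

/-- Images of the arrows in the 5-dimensional representation `ẽ₅E`. -/
def mga : EArr → Matrix (Fin 5) (Fin 5) K
  | .b2 => EM K 0 1
  | .a5 => EM K 1 2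
  | .a6 => EM K 2 3
  | .b1 => EM K 3 4
  | _ => 0

@[simp] lemma mge0 : mge K 0 = EM K 3 3 := rfl
@[simp] lemma mge1 : mge K 1 = 0 := rfl
@[simp] lemma mge2 : mge K 2 = EM K 1 1 := rfl
@[simp] lemma mge3 : mge K 3 = EM K 2 2 := rfl
@[simp] lemma mge4 : mge K 4 = EM K 0 0 + EM K 4 4 := rfl
@[simp] lemma mge5 : mge K 5 = 0 := rfl

noncomputable def rho : EFree K →ₐ[K] Matrix (Fin 5) (Fin 5) K :=
  FreeAlgebra.lift K (Sum.elim (mge K) (mga K))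

@[simp] lemma rho_fe (i : Fin 6) : rho K (fe i) = mge K i :=
  FreeAlgebra.lift_ι_apply _ _

@[simp] lemma rho_fa (a : EArr) : rho K (fa a) = mga K a :=
  FreeAlgebra.lift_ι_apply _ _

/-- `M` has all nonzero entries at least `k` above the diagonal. -/
def Sh (k : ℕ) (M : Matrix (Fin 5) (Fin 5) K) : Prop :=
  ∀ i j : Fin 5, M i j ≠ 0 → (i : ℕ) + k ≤ (j : ℕ)

variable {K m l}

lemma Sh.mul {k k' : ℕ} {A B : Matrix (Fin 5) (Fin 5) K}
    (hA : Sh K k A) (hB : Sh K k' B) : Sh K (k + k') (A * B) := by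
  intro i j h
  rw [Matrix.mul_apply] at h
  obtain ⟨p, -, hp⟩ := Finset.exists_ne_zero_of_sum_ne_zero h
  have h1 := hA i p (left_ne_zero_of_mul hp)
  have h2 := hB p j (right_ne_zero_of_mul hp)
  omega

lemma Sh.mono {k k' : ℕ} {A : Matrix (Fin 5) (Fin 5) K} (h : k' ≤ k)
    (hA : Sh K k A) : Sh K k' A := fun i j hij => by
  have := hA i j hij; omega

lemma Sh.eq_zero {A : Matrix (Fin 5) (Fin 5) K} (h : Sh K 5 A) : A = 0 := by
  ext i j
  by_contra hij
  have := h i j hij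
  have := j.isLt
  simp only [Matrix.zero_apply] at hij
  omega

lemma sh_EM {i j : Fin 5} {k : ℕ} (h : (i : ℕ) + k ≤ (j : ℕ)) :
    Sh K k (EM K i j) := by
  intro a b hab
  by_cases h1 : i = a ∧ j = b
  · obtain ⟨rfl, rfl⟩ := h1; exact h
  · exact absurd (Matrix.single_apply_of_ne i j 1 a b h1) hab

lemma sh_zero (k : ℕ) : Sh K k (0 : Matrix (Fin 5) (Fin 5) K) :=
  fun _ _ h => absurd rfl h

lemma sh_one : Sh K 0 (1 : Matrix (Fin 5) (Fin 5) K) := by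
  intro i j h
  rcases eq_or_ne i j with rfl | hne
  · omega
  · exact absurd (Matrix.one_apply_ne hne) h

lemma sh_mga (a : EArr) : Sh K 1 (mga K a) := by
  cases a <;> first
    | exact sh_zero 1
    | exact sh_EM (by decide)

lemma sh_list (c : List EArr) : Sh K c.length ((c.map (mga K)).prod) := by
  induction c with
  | nil => simpa using sh_one
  | cons a c ih =>
      have := (sh_mga (K := K) a).mul ih
      simpa [List.length_cons, Nat.add_comm] using this

lemma rho_pathProd (c : List EArr) :
    rho K (pathProd c) = (c.map (mga K)).prod := by
  rw [pathProd, map_list_prod, List.map_map]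
  simp only [Function.comp_def, rho_fa]

lemma rho_pow_zero (hm : 2 ≤ m) (c : List EArr)
    (hlen : c.length = 3 ∨ c.length = 4) :
    rho K (pathProd c) ^ m = 0 := by
  have h3 : Sh K 3 (rho K (pathProd c)) := by
    rw [rho_pathProd]
    exact (sh_list c).mono (by omega)
  have h2 : rho K (pathProd c) ^ 2 = 0 := by
    rw [sq]
    exact ((h3.mul h3).mono (by omega)).eq_zero
  have : m = 2 + (m - 2) := by omega
  rw [this, pow_add, h2, zero_mul]

variable (K m l)

lemma rho_rel (hm : 2 ≤ m) : ∀ x y, ERel K m l x y → rho K x = rho K y := by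
  intro x y h
  induction h with
  | orth i j =>
      fin_cases i <;> fin_cases j <;>
        simp [_root_.map_mul, mul_add, add_mul]
  | total =>
      rw [_root_.map_sum, Fin.sum_univ_six, _root_.map_one]
      simp only [rho_fe, mge0, mge1, mge2, mge3, mge4, mge5]
      refine Matrix.ext fun i j => ?_
      fin_cases i <;> fin_cases j <;>
        simp [Matrix.one_apply, Matrix.add_apply, Matrix.zero_apply,
          Matrix.single_apply_same, Matrix.single_apply_of_ne]
  | src a =>
      cases a <;> simp [_root_.map_mul, mga, add_mul, EArr.src]
  | tgt a =>
      cases a <;> simp [_root_.map_mul, mga, mul_add, EArr.tgt]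
  | E1 => simp [A1, A2, A3, A4, B1, B2, _root_.map_mul, _root_.map_sub, _root_.map_add, mga]
  | E2 => simp [A1, A2, A3, A4, A5, A6, _root_.map_mul, _root_.map_add, _root_.map_pow, mga]
  | E3a => simp [G0, B1, _root_.map_mul, mga]
  | E3b => simp [G0, A3, A5, A6, _root_.map_mul, mga]
  | E3c => simp [G0, A1, A2, A5, A6, _root_.map_mul, _root_.map_add, _root_.map_pow, mga]
  | E4a => simp [A1, A2, A5, A6, G0, _root_.map_mul, _root_.map_add, _root_.map_pow, mga]
  | E4b => simp [A1, A2, A3, A5, A6, _root_.map_mul, _root_.map_pow, mga]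
  | E5a => simp [A4, A5, A6, G0, _root_.map_mul, mga]
  | E5b => simp [A1, A2, A4, A5, A6, _root_.map_mul, _root_.map_pow, mga]
  | E6 => simp [A1, A2, A3, A4, A5, A6, _root_.map_mul, _root_.map_add, _root_.map_pow, mga]
  | E7a => simp [B2, G0, _root_.map_mul, mga]
  | E7b => simp [A1, A5, A6, B2, _root_.map_mul, mga]
  | E7c => simp [A3, A5, A6, B2, _root_.map_mul, mga]
  | E7d => simp [A5, A6, B1, B2, _root_.map_mul, mga]
  | E8l i c hc hlen θ hθ =>
      rw [_root_.map_mul, _root_.map_pow, rho_pow_zero hm c hlen, mul_zero, _root_.map_zero]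
  | E8r i c hc hlen φ hφ =>
      rw [_root_.map_mul, _root_.map_pow, rho_pow_zero hm c hlen, zero_mul, _root_.map_zero]

noncomputable def rho' (hm : 2 ≤ m) : EAlg K m l →ₐ[K] Matrix (Fin 5) (Fin 5) K :=
  RingQuot.liftAlgHom K ⟨rho K, fun _ _ h => rho_rel K m l hm _ _ h⟩

lemma rho'_q (hm : 2 ≤ m) (x : EFree K) :
    rho' K m l hm (eq' K m l x) = rho K x := by
  rw [eq', rho']
  exact RingQuot.liftAlgHom_mkAlgHom_apply _ _ _ _

end TwoTiltsEAux

namespace TwoTiltsEAux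
open TwoTiltsE

variable (K : Type*) [Field K] (m : ℕ) (l : K)

lemma qrel {x y : EFree K} (h : ERel K m l x y) :
    eq' K m l x = eq' K m l y := RingQuot.mkAlgHom_rel K h

lemma qee (i j : Fin 6) : eq' K m l (fe i) * eq' K m l (fe j) =
    if i = j then eq' K m l (fe i) else 0 := by
  rw [← _root_.map_mul, qrel K m l (ERel.orth i j)]
  by_cases h : i = j <;> simp [h]

lemma qsrc (a : EArr) :
    eq' K m l (fe a.src) * eq' K m l (fa a) = eq' K m l (fa a) := by
  rw [← _root_.map_mul]; exact qrel K m l (ERel.src a)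

lemma qtgt (a : EArr) :
    eq' K m l (fa a) * eq' K m l (fe a.tgt) = eq' K m l (fa a) := by
  rw [← _root_.map_mul]; exact qrel K m l (ERel.tgt a)

lemma q_fa_fe (a : EArr) {j : Fin 6} (h : a.tgt ≠ j) :
    eq' K m l (fa a) * eq' K m l (fe j) = 0 := by
  rw [← qtgt K m l a, mul_assoc, qee, if_neg h, mul_zero]

/-- The candidate basis of `ẽ₅ E`. -/
noncomputable def v : Fin 5 → EAlg K m l :=
  ![eq' K m l (fe 4), eq' K m l B2, eq' K m l (B2 * A5),
    eq' K m l (B2 * A5 * A6), eq' K m l (B2 * A5 * A6 * B1)]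

/-- The last arrow of each basis path (dummy for `i = 0`). -/
def la : Fin 5 → EArr := ![.b2, .b2, .a5, .a6, .b1]

/-- End vertex of each basis path. -/
def tv : Fin 5 → Fin 6 := ![4, 2, 3, 0, 4]

lemma v_mul_fe (i : Fin 5) (j : Fin 6) :
    v K m l i * eq' K m l (fe j) = if tv i = j then v K m l i else 0 := by
  have key : ∀ (x : EAlg K m l) (a : EArr) (j : Fin 6),
      (x * eq' K m l (fa a)) * eq' K m l (fe j)
        = if a.tgt = j then x * eq' K m l (fa a) else 0 := by
    intro x a j
    rw [mul_assoc]
    by_cases h : a.tgt = j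
    · subst h
      rw [if_pos rfl, qtgt]
    · rw [if_neg h, q_fa_fe K m l a h, mul_zero]
  fin_cases i
  · simpa [v, tv] using qee K m l 4 j
  · simpa [v, tv, EArr.tgt, B2] using key (1 : EAlg K m l) .b2 j
  · have := key (eq' K m l B2) .a5 j
    simp [v, tv, EArr.tgt, A5, B2, ← _root_.map_mul] at this ⊢
    rw [this]; split_ifs <;> simp_all
  · have := key (eq' K m l (B2 * A5)) .a6 j
    simp [v, tv, EArr.tgt, A5, A6, B2, ← _root_.map_mul] at this ⊢
    rw [this]; split_ifs <;> simp_all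
  · have := key (eq' K m l (B2 * A5 * A6)) .b1 j
    simp [v, tv, EArr.tgt, A5, A6, B1, B2, ← _root_.map_mul] at this ⊢
    rw [this]; split_ifs <;> simp_all

lemma q_v0_b2 : v K m l 0 * eq' K m l (fa .b2) = v K m l 1 := qsrc K m l .b2

lemma q_v1_a5 : v K m l 1 * eq' K m l (fa .a5) = v K m l 2 :=
  (_root_.map_mul (eq' K m l) B2 A5).symm

lemma q_v2_a6 : v K m l 2 * eq' K m l (fa .a6) = v K m l 3 :=
  (_root_.map_mul (eq' K m l) (B2 * A5) A6).symm

lemma q_v3_b1 : v K m l 3 * eq' K m l (fa .b1) = v K m l 4 :=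
  (_root_.map_mul (eq' K m l) (B2 * A5 * A6) B1).symm

lemma q_v1_g0 : v K m l 1 * eq' K m l (fa .g0) = 0 := by
  have h : eq' K m l B2 * eq' K m l G0 = 0 := by
    rw [← _root_.map_mul, qrel K m l ERel.E7a, _root_.map_zero]
  exact h

lemma q_v3_a1 : v K m l 3 * eq' K m l (fa .a1) = 0 := by
  have h : eq' K m l (B2 * A5 * A6) * eq' K m l A1 = 0 := by
    rw [← _root_.map_mul, qrel K m l ERel.E7b, _root_.map_zero]
  exact h

lemma q_v3_a3 : v K m l 3 * eq' K m l (fa .a3) = 0 := by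
  have h : eq' K m l (B2 * A5 * A6) * eq' K m l A3 = 0 := by
    rw [← _root_.map_mul, qrel K m l ERel.E7c, _root_.map_zero]
  exact h

lemma q_v4_b2 : v K m l 4 * eq' K m l (fa .b2) = 0 := by
  have h : eq' K m l (B2 * A5 * A6 * B1) * eq' K m l B2 = 0 := by
    rw [← _root_.map_mul, qrel K m l ERel.E7d, _root_.map_zero]
  exact h

lemma v_mul_fa_mem (i : Fin 5) (a : EArr) :
    v K m l i * eq' K m l (fa a) ∈ Submodule.span K (Set.range (v K m l)) := by
  have h1 : v K m l i * eq' K m l (fa a)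
      = (v K m l i * eq' K m l (fe a.src)) * eq' K m l (fa a) := by
    rw [mul_assoc, qsrc]
  rcases eq_or_ne (tv i) a.src with ht | ht
  · fin_cases i <;> cases a <;>
      first
        | exact absurd ht (by decide)
        | exact Submodule.subset_span ⟨1, (q_v0_b2 K m l).symm⟩
        | exact Submodule.subset_span ⟨2, (q_v1_a5 K m l).symm⟩
        | exact Submodule.subset_span ⟨3, (q_v2_a6 K m l).symm⟩
        | exact Submodule.subset_span ⟨4, (q_v3_b1 K m l).symm⟩
        | exact (q_v1_g0 K m l) ▸ Submodule.zero_mem _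
        | exact (q_v3_a1 K m l) ▸ Submodule.zero_mem _
        | exact (q_v3_a3 K m l) ▸ Submodule.zero_mem _
        | exact (q_v4_b2 K m l) ▸ Submodule.zero_mem _
  · rw [h1, v_mul_fe, if_neg ht, zero_mul]
    exact Submodule.zero_mem _

lemma v_mul_fe_mem (i : Fin 5) (j : Fin 6) :
    v K m l i * eq' K m l (fe j) ∈ Submodule.span K (Set.range (v K m l)) := by
  rw [v_mul_fe]
  split
  · exact Submodule.subset_span ⟨i, rfl⟩
  · exact Submodule.zero_mem _

lemma span_closed (y : EFree K) :
    ∀ s ∈ Submodule.span K (Set.range (v K m l)),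
      s * eq' K m l y ∈ Submodule.span K (Set.range (v K m l)) := by
  induction y using FreeAlgebra.induction with
  | grade0 r =>
      intro s hs
      rw [AlgHom.commutes, Algebra.algebraMap_eq_smul_one, mul_smul_comm, mul_one]
      exact Submodule.smul_mem _ _ hs
  | grade1 g =>
      intro s hs
      induction hs using Submodule.span_induction with
      | mem x hx =>
          obtain ⟨i, rfl⟩ := hx
          cases g with
          | inl j => exact v_mul_fe_mem K m l i j
          | inr a => exact v_mul_fa_mem K m l i a
      | zero => rw [zero_mul]; exact Submodule.zero_mem _
      | add x y hx hy hx' hy' => rw [add_mul]; exact Submodule.add_mem _ hx' hy'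
      | smul a x hx hx' => rw [smul_mul_assoc]; exact Submodule.smul_mem _ _ hx'
  | mul x y hx hy =>
      intro s hs
      rw [_root_.map_mul, ← mul_assoc]
      exact hy _ (hx _ hs)
  | add x y hx hy =>
      intro s hs
      rw [_root_.map_add, mul_add]
      exact Submodule.add_mem _ (hx s hs) (hy s hs)

lemma e4_mul_v (i : Fin 5) :
    eq' K m l (fe 4) * v K m l i = v K m l i := by
  have hb2 : eq' K m l (fe 4) * eq' K m l B2 = eq' K m l B2 := qsrc K m l .b2
  fin_cases i
  · simpa [v] using (qee K m l 4 4).trans (if_pos rfl)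
  · simpa [v] using hb2
  · show eq' K m l (fe 4) * eq' K m l (B2 * A5) = eq' K m l (B2 * A5)
    rw [_root_.map_mul, ← mul_assoc, hb2]
  · show eq' K m l (fe 4) * eq' K m l (B2 * A5 * A6) = eq' K m l (B2 * A5 * A6)
    rw [_root_.map_mul, ← mul_assoc, _root_.map_mul, ← mul_assoc, hb2]
  · show eq' K m l (fe 4) * eq' K m l (B2 * A5 * A6 * B1) = eq' K m l (B2 * A5 * A6 * B1)
    rw [_root_.map_mul, ← mul_assoc, _root_.map_mul, ← mul_assoc,
      _root_.map_mul, ← mul_assoc, hb2]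

lemma eproj_eq :
    eproj K m l 4 = Submodule.span K (Set.range (v K m l)) := by
  apply le_antisymm
  · rintro x ⟨y, rfl⟩
    obtain ⟨z, rfl⟩ := RingQuot.mkAlgHom_surjective K (ERel K m l) y
    have h0 : (LinearMap.mulLeft K (eidem K m l 4)) (RingQuot.mkAlgHom K (ERel K m l) z)
        = v K m l 0 * eq' K m l z := rfl
    rw [h0]
    exact span_closed K m l z _ (Submodule.subset_span ⟨0, rfl⟩)
  · rw [Submodule.span_le]
    rintro x ⟨i, rfl⟩
    exact ⟨v K m l i, e4_mul_v K m l i⟩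

noncomputable def T (hm : 2 ≤ m) : EAlg K m l →ₗ[K] (Fin 5 → K) where
  toFun x := rho' K m l hm x 0
  map_add' x y := by rw [_root_.map_add]; rfl
  map_smul' c x := by simp only [RingHom.id_apply]; rw [_root_.map_smul]; rfl

lemma T_v (hm : 2 ≤ m) (i : Fin 5) :
    T K m l hm (v K m l i) = Pi.single i 1 := by
  fin_cases i <;>
    · show rho' K m l hm (eq' K m l _) 0 = _
      rw [rho'_q]
      funext j
      fin_cases j <;>
        simp [_root_.map_mul, mga, Pi.single_apply, Matrix.add_apply,
          Matrix.single_apply_same, Matrix.single_apply_of_ne,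
          B2, A5, A6, B1]

lemma v_li (hm : 2 ≤ m) : LinearIndependent K (v K m l) := by
  apply LinearIndependent.of_comp (T K m l hm)
  have hc : (⇑(T K m l hm)) ∘ (v K m l) = fun i => Pi.single i (1 : K) :=
    funext fun i => T_v K m l hm i
  rw [hc]
  have hb := (Pi.basisFun K (Fin 5)).linearIndependent
  have he : ⇑(Pi.basisFun K (Fin 5)) = fun i : Fin 5 => Pi.single i (1 : K) :=
    funext fun i => Pi.basisFun_apply K (Fin 5) i
  rwa [he] at hb

end TwoTiltsEAux


open TwoTiltsE in
/-- The set `{ε₅, β₂, β₂α₅, β₂α₅α₆, β₂α₅α₆β₁}` is a `K`-basis of the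
indecomposable projective module `ẽ₅E` over `E = E(m,λ)`; in particular
`dim_K ẽ₅E = 5`.  (Vertex `5` is encoded as `4 : Fin 6`.) -/
theorem E_basis_proj_five (K : Type*) [Field K] (m : ℕ) (hm : 2 ≤ m)
    (l : K) (hl : l ≠ 0) :
    (∃ b : Module.Basis (Fin 5) K (eproj K m l 4),
      (b 0 : EAlg K m l) = eq' K m l (fe 4) ∧
      (b 1 : EAlg K m l) = eq' K m l B2 ∧
      (b 2 : EAlg K m l) = eq' K m l (B2 * A5) ∧
      (b 3 : EAlg K m l) = eq' K m l (B2 * A5 * A6) ∧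
      (b 4 : EAlg K m l) = eq' K m l (B2 * A5 * A6 * B1)) ∧
    Module.finrank K (eproj K m l 4) = 5 := by
    classical
  have hli : LinearIndependent K (TwoTiltsEAux.v K m l) := TwoTiltsEAux.v_li K m l hm
  have hev : eproj K m l 4 = Submodule.span K (Set.range (TwoTiltsEAux.v K m l)) :=
    TwoTiltsEAux.eproj_eq K m l
  let b0 : Module.Basis (Fin 5) K (Submodule.span K (Set.range (TwoTiltsEAux.v K m l))) :=
    Module.Basis.span hli
  let b : Module.Basis (Fin 5) K (eproj K m l 4) :=
    b0.map (LinearEquiv.ofEq _ _ hev.symm)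
  have hb : ∀ i, (b i : EAlg K m l) = TwoTiltsEAux.v K m l i := by
    intro i
    have h1 : b i = (LinearEquiv.ofEq _ _ hev.symm) (b0 i) := Module.Basis.map_apply _ _ _
    rw [h1, LinearEquiv.coe_ofEq_apply]
    exact congrArg Subtype.val (Module.Basis.span_apply hli i)
  refine ⟨⟨b, hb 0, hb 1, hb 2, hb 3, hb 4⟩, ?_⟩
  rw [Module.finrank_eq_card_basis b, Fintype.card_fin]
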